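/- Let K be a compact convex subset of 𝔹 ⊂ ℝⁿ with circumradius 1 and diameter D(K) < √(2n/(n−1)). Then K is full-dimensional (dim K = n) and 𝔹 ⊆ K + (1 − √(1 − ((n−1)/(2n))·D(K)²))·𝔹. -/

import Mathlib

open Metric Set Pointwise

noncomputable section

/-- `E n` is the Euclidean space `ℝⁿ`. -/
abbrev E (n : ℕ) := EuclideanSpace ℝ (Fin n)

open RealInnerProductSpace

lemma pad_sum {α M : Type*} [AddCommMonoid M] (s : Finset α) [DecidableEq α]
    (f : α → M) (m : ℕ) (hcard : s.card ≤ m) :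
    ∑ i : Fin m, (if h : (i : ℕ) < s.card then f (s.equivFin.symm ⟨i, h⟩) else 0)
      = ∑ x ∈ s, f x := by
  classical
  rw [Fin.sum_univ_eq_sum_range (fun i => if h : i < s.card then f (s.equivFin.symm ⟨i, h⟩) else 0) m]
  rw [← Finset.sum_subset (Finset.range_subset_range.2 hcard)
    (fun i _ hi => by rw [dif_neg (Finset.mem_range.not.1 hi)])]
  rw [← Fin.sum_univ_eq_sum_range (fun i => if h : i < s.card then f (s.equivFin.symm ⟨i, h⟩) else 0) s.card]
  have h1 : ∀ i : Fin s.card,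
      (if h : (i : ℕ) < s.card then f (s.equivFin.symm ⟨(i : ℕ), h⟩) else 0)
        = f (s.equivFin.symm i) := by
    intro i
    rw [dif_pos i.isLt]
  rw [Finset.sum_congr rfl fun i _ => h1 i]
  rw [Equiv.sum_comp s.equivFin.symm (fun x : s => f x)]
  exact Finset.sum_coe_sort s f

lemma isCompact_convexHull_of_isCompact {n : ℕ} {P : Set (E n)} (hP : IsCompact P) :
    IsCompact (convexHull ℝ P) := by
  classical
  rcases P.eq_empty_or_nonempty with h | ⟨p₀, hp₀⟩
  · simp [h]
  set m := n + 1 with hm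
  set S : Set ((Fin m → ℝ) × (Fin m → E n)) :=
    (stdSimplex ℝ (Fin m)) ×ˢ (Set.pi Set.univ fun _ : Fin m => P) with hS
  have hScomp : IsCompact S := (isCompact_stdSimplex ℝ (Fin m)).prod (isCompact_univ_pi fun _ => hP)
  set φ : (Fin m → ℝ) × (Fin m → E n) → E n := fun wz => ∑ i, wz.1 i • wz.2 i with hφ
  have hφcont : Continuous φ := by
    apply continuous_finset_sum
    intro i _
    exact ((continuous_apply i).comp continuous_fst).smul
      ((continuous_apply i).comp continuous_snd)
  have himg : φ '' S = convexHull ℝ P := by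
    apply Subset.antisymm
    · rintro x ⟨⟨w, z⟩, ⟨hw, hz⟩, rfl⟩
      exact (convex_convexHull ℝ P).sum_mem (fun i _ => hw.1 i) hw.2
        (fun i _ => subset_convexHull ℝ P (hz i (Set.mem_univ i)))
    · intro x hx
      rw [convexHull_eq_union] at hx
      simp only [Set.mem_iUnion] at hx
      obtain ⟨s, hsP, hsAI, hxs⟩ := hx
      rw [Finset.convexHull_eq] at hxs
      obtain ⟨w, hw0, hw1, hwc⟩ := hxs
      have hxsum : ∑ q ∈ s, w q • q = x := by
        rw [← hwc, Finset.centerMass_eq_of_sum_1 _ _ hw1]; rfl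
      have hcard : s.card ≤ m := by
        have h1 := hsAI.card_le_finrank_succ
        rw [Fintype.card_coe] at h1
        have h2 : Module.finrank ℝ (vectorSpan ℝ (Set.range ((↑) : s → E n))) ≤ n := by
          have h3 := Submodule.finrank_le (vectorSpan ℝ (Set.range ((↑) : s → E n)))
          rwa [finrank_euclideanSpace, Fintype.card_fin] at h3
        omega
      refine ⟨(fun i : Fin m => if h : (i : ℕ) < s.card then w (s.equivFin.symm ⟨i, h⟩) else 0,
               fun i : Fin m => if h : (i : ℕ) < s.card then (s.equivFin.symm ⟨i, h⟩ : E n) else p₀),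
              ⟨⟨?_, ?_⟩, ?_⟩, ?_⟩
      · intro i
        by_cases h : (i : ℕ) < s.card
        · simp only [dif_pos h]; exact hw0 _ (Finset.coe_mem _)
        · simp [dif_neg h]
      · exact (pad_sum s w m hcard).trans hw1
      · intro i _
        by_cases h : (i : ℕ) < s.card
        · simp only [dif_pos h]; exact hsP (Finset.coe_mem _)
        · simp only [dif_neg h]; exact hp₀
      · -- the combination equals x
        show (∑ i : Fin m, _) = x
        rw [← hxsum, ← pad_sum s (fun q => w q • q) m hcard]
        refine Finset.sum_congr rfl fun i _ => ?_
        by_cases h : (i : ℕ) < s.card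
        · simp only [dif_pos h]
        · simp only [dif_neg h, zero_smul]
  rw [← himg]
  exact hScomp.image hφcont

lemma exists_proj {n : ℕ} {C : Set (E n)} (hC : Convex ℝ C) (hcl : IsClosed C)
    (hne : C.Nonempty) (z : E n) :
    ∃ w ∈ C, ∀ y ∈ C, ⟪z - w, y - w⟫ ≤ 0 := by
  obtain ⟨w, hwC, hw⟩ := exists_norm_eq_iInf_of_complete_convex hne hcl.isComplete hC z
  exact ⟨w, hwC, fun y hy => ((norm_eq_iInf_iff_real_inner_le_zero hC hwC).1 hw) y hy⟩

lemma zero_mem_hull {n : ℕ} {K : Set (E n)} (hK : IsCompact K)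
    (hKB : K ⊆ closedBall 0 1)
    (hmin : ∀ c' r', K ⊆ closedBall c' r' → (1 : ℝ) ≤ r') :
    (0 : E n) ∈ convexHull ℝ (K ∩ sphere (0 : E n) 1) := by
  classical
  by_contra h0
  have hKne : K.Nonempty := by
    rcases K.eq_empty_or_nonempty with h | h
    · have := hmin 0 0 (by rw [h]; exact empty_subset _)
      norm_num at this
    · exact h
  set P : Set (E n) := K ∩ sphere (0 : E n) 1 with hP
  have hPcomp : IsCompact P := hK.inter_right isClosed_sphere
  rcases P.eq_empty_or_nonempty with hPe | hPne
  · obtain ⟨x₀, hx₀K, hx₀max⟩ := hK.exists_isMaxOn hKne continuous_norm.continuousOn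
    have hM1 : ‖x₀‖ ≤ 1 := mem_closedBall_zero_iff.1 (hKB hx₀K)
    have hMlt : ‖x₀‖ < 1 := by
      refine lt_of_le_of_ne hM1 fun h => ?_
      have : x₀ ∈ P := ⟨hx₀K, mem_sphere_zero_iff_norm.2 h⟩
      rw [hPe] at this
      exact notMem_empty _ this
    have hsub : K ⊆ closedBall 0 ‖x₀‖ := fun x hx => mem_closedBall_zero_iff.2 (hx₀max hx)
    linarith [hmin 0 ‖x₀‖ hsub]
  · have hhull : IsCompact (convexHull ℝ P) := isCompact_convexHull_of_isCompact hPcomp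
    obtain ⟨w, hwP, hw⟩ := exists_proj (convex_convexHull ℝ P) hhull.isClosed
      (hPne.mono (subset_convexHull ℝ P)) 0
    have hw0 : w ≠ 0 := by
      intro h
      rw [h] at hwP
      exact h0 hwP
    have hwn : 0 < ‖w‖ := norm_pos_iff.2 hw0
    have hwkey : ∀ p ∈ P, ‖w‖ ^ 2 ≤ ⟪w, p⟫ := by
      intro p hp
      have h1 := hw p (subset_convexHull ℝ P hp)
      have h2 : ⟪(0 : E n) - w, p - w⟫ = -⟪w, p⟫ + ‖w‖ ^ 2 := by
        rw [zero_sub, inner_neg_left, inner_sub_right, real_inner_self_eq_norm_sq]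
        ring
      rw [h2] at h1
      linarith
    set δ : ℝ := ‖w‖ ^ 2 with hδ
    have hδpos : 0 < δ := by positivity
    have hw1 : ‖w‖ ≤ 1 := by
      have : convexHull ℝ P ⊆ closedBall 0 1 := convexHull_min
        (fun p hp => hKB hp.1) (convex_closedBall _ _)
      exact mem_closedBall_zero_iff.1 (this hwP)
    have hδ1 : δ ≤ 1 := by rw [hδ]; nlinarith
    set A : Set (E n) := K ∩ {x | ⟪w, x⟫ ≤ δ / 2} with hA
    have hAcl : IsClosed {x : E n | ⟪w, x⟫ ≤ δ / 2} :=
      isClosed_le (Continuous.inner continuous_const continuous_id) continuous_const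
    have hAcomp : IsCompact A := hK.inter_right hAcl
    obtain ⟨M, hM0, hMlt, hMA⟩ :
        ∃ M : ℝ, 0 ≤ M ∧ M < 1 ∧ ∀ x ∈ A, ‖x‖ ≤ M := by
      rcases A.eq_empty_or_nonempty with hAe | hAne
      · exact ⟨0, le_rfl, one_pos, fun x hx => absurd (hAe ▸ hx) (notMem_empty x)⟩
      · obtain ⟨x₀, hx₀A, hx₀max⟩ := hAcomp.exists_isMaxOn hAne continuous_norm.continuousOn
        have h1 : ‖x₀‖ ≤ 1 := mem_closedBall_zero_iff.1 (hKB hx₀A.1)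
        have h2 : ‖x₀‖ ≠ 1 := by
          intro h
          have hx₀P : x₀ ∈ P := ⟨hx₀A.1, mem_sphere_zero_iff_norm.2 h⟩
          have h3 := hwkey x₀ hx₀P
          have h4 := hx₀A.2
          simp only [Set.mem_setOf_eq] at h4
          linarith
        exact ⟨‖x₀‖, norm_nonneg _, lt_of_le_of_ne h1 h2, fun x hx => hx₀max hx⟩
    set t : ℝ := min (1 / 2) ((1 - M) / (2 * (‖w‖ + 1))) with ht
    have htpos : 0 < t := lt_min (by norm_num) (div_pos (by linarith) (by positivity))
    have ht12 : t ≤ 1 / 2 := min_le_left _ _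
    have htM : t ≤ (1 - M) / (2 * (‖w‖ + 1)) := min_le_right _ _
    set r' : ℝ := max (M + t * ‖w‖) (Real.sqrt (1 - t * δ / 2)) with hr'
    have hsub : K ⊆ closedBall (t • w) r' := by
      intro x hx
      rw [mem_closedBall, dist_eq_norm]
      by_cases hxA : ⟪w, x⟫ ≤ δ / 2
      · have hxA' : x ∈ A := ⟨hx, hxA⟩
        have h5 : ‖x - t • w‖ ≤ ‖x‖ + t * ‖w‖ := by
          calc ‖x - t • w‖ ≤ ‖x‖ + ‖t • w‖ := norm_sub_le _ _
            _ = ‖x‖ + t * ‖w‖ := by rw [norm_smul, Real.norm_eq_abs, abs_of_pos htpos]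
        exact le_trans (by linarith [hMA x hxA']) (le_max_left _ _)
      · push_neg at hxA
        have hx1 : ‖x‖ ≤ 1 := mem_closedBall_zero_iff.1 (hKB hx)
        have h6 : ‖x - t • w‖ ^ 2 = ‖x‖ ^ 2 - 2 * t * ⟪x, w⟫ + t ^ 2 * δ := by
          rw [norm_sub_sq_real, inner_smul_right, norm_smul, Real.norm_eq_abs,
            abs_of_pos htpos, mul_pow, hδ]
          ring
        have h7 : ⟪x, w⟫ = ⟪w, x⟫ := real_inner_comm _ _
        have e0 : ‖x‖ ^ 2 ≤ 1 := by nlinarith [norm_nonneg x]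
        have e1 : t * (δ / 2) < t * ⟪w, x⟫ := mul_lt_mul_of_pos_left hxA htpos
        have e2 : t ^ 2 * δ ≤ t * δ / 2 := by nlinarith [mul_le_mul_of_nonneg_right ht12 (mul_pos htpos hδpos).le]
        have h8 : ‖x - t • w‖ ^ 2 ≤ 1 - t * δ / 2 := by
          rw [h6, h7]
          linarith
        have h9 : ‖x - t • w‖ ≤ Real.sqrt (1 - t * δ / 2) := by
          rw [Real.le_sqrt (norm_nonneg _) (by nlinarith)]
          exact h8
        exact le_trans h9 (le_max_right _ _)
    have hr1 : r' < 1 := by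
      rw [hr']
      apply max_lt
      · have h10 : t * ‖w‖ ≤ (1 - M) / (2 * (‖w‖ + 1)) * ‖w‖ :=
          mul_le_mul_of_nonneg_right htM (norm_nonneg _)
        have h11 : (1 - M) / (2 * (‖w‖ + 1)) * ‖w‖ < 1 - M := by
          rw [div_mul_eq_mul_div, div_lt_iff₀ (by positivity)]
          nlinarith [norm_nonneg w]
        linarith
      · have h12 : 1 - t * δ / 2 < 1 := by nlinarith
        have h13 : 0 ≤ 1 - t * δ / 2 := by nlinarith
        calc Real.sqrt (1 - t * δ / 2) < Real.sqrt 1 := Real.sqrt_lt_sqrt h13 h12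
          _ = 1 := Real.sqrt_one
    linarith [hmin (t • w) r' hsub]

set_option maxHeartbeats 1000000 in
lemma exists_deep_point {n : ℕ} (hn : 1 ≤ n) {F : Finset (E n)} (hne : F.Nonempty)
    (hsph : ∀ q ∈ F, ‖q‖ = 1) (hcard : F.card ≤ n) {D : ℝ} (hD0 : 0 ≤ D)
    (hdiam : ∀ p ∈ F, ∀ q ∈ F, dist p q ≤ D) :
    ∃ c ∈ convexHull ℝ (F : Set (E n)),
      ∀ x ∈ convexHull ℝ (F : Set (E n)),
        1 - ((n : ℝ) - 1) / (2 * n) * D ^ 2 ≤ ⟪c, x⟫ := by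
  classical
  set f : E n → ℝ := fun x => F.sup' hne (fun q => dist q x) with hf
  have hlip : ∀ x y : E n, f x ≤ f y + dist x y := by
    intro x y
    refine Finset.sup'_le _ _ (fun q hq => ?_)
    calc dist q x ≤ dist q y + dist y x := dist_triangle _ _ _
    _ ≤ f y + dist x y := by
        have := Finset.le_sup' (fun q => dist q y) hq
        rw [dist_comm y x]; simp only [hf] at this ⊢; linarith
  have hcont : Continuous f := by
    refine LipschitzWith.continuous (K := 1) ?_
    refine LipschitzWith.of_dist_le_mul (fun x y => ?_)
    simp only [NNReal.coe_one, one_mul]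
    rw [Real.dist_eq, abs_sub_le_iff]
    constructor
    · have := hlip x y; linarith
    · have := hlip y x; rw [dist_comm] at this; linarith
  obtain ⟨c, hc3, hmin⟩ := (isCompact_closedBall (0 : E n) 3).exists_isMinOn
    ⟨0, mem_closedBall_self (by norm_num)⟩ hcont.continuousOn
  set ρ : ℝ := f c with hρ
  have hf0 : f 0 = 1 := by
    apply le_antisymm
    · refine Finset.sup'_le _ _ (fun q hq => ?_)
      rw [dist_zero_right, hsph q hq]
    · obtain ⟨q, hq⟩ := hne
      have := Finset.le_sup' (fun q => dist q (0 : E n)) hq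
      rwa [dist_zero_right, hsph q hq] at this
  have hρ1 : ρ ≤ 1 := by
    have := hmin (mem_closedBall_self (by norm_num : (0:ℝ) ≤ 3))
    simpa [hf0] using this
  have hρ0 : 0 ≤ ρ := by
    obtain ⟨q, hq⟩ := hne
    exact le_trans dist_nonneg (Finset.le_sup' (fun q => dist q c) hq)
  have hcball : ∀ q ∈ F, dist q c ≤ ρ := fun q hq => Finset.le_sup' (fun q => dist q c) hq
  have hc2 : ‖c‖ ≤ 2 := by
    obtain ⟨q, hq⟩ := hne
    have h1 : ‖c‖ ≤ ‖c - q‖ + ‖q‖ := by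
      simpa using norm_add_le (c - q) q
    have h2 : ‖c - q‖ = dist q c := by rw [dist_comm, dist_eq_norm]
    have := hcball q hq
    rw [hsph q hq] at h1
    linarith
  set T : Finset (E n) := F.filter (fun q => dist q c = ρ) with hT
  have hTF : T ⊆ F := Finset.filter_subset _ _
  have hTne : T.Nonempty := by
    obtain ⟨q, hq, hqe⟩ := Finset.exists_mem_eq_sup' hne (fun q => dist q c)
    exact ⟨q, Finset.mem_filter.2 ⟨hq, hqe.symm⟩⟩
  have hTdist : ∀ q ∈ T, dist q c = ρ := fun q hq => (Finset.mem_filter.1 hq).2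
  -- the center is in the convex hull of the touching points
  have hcT : c ∈ convexHull ℝ (T : Set (E n)) := by
    by_contra hc
    obtain ⟨w, hwT, hw⟩ := exists_proj (convex_convexHull ℝ _)
      (((T : Set (E n)).toFinite.isCompact_convexHull ℝ).isClosed)
      ⟨_, subset_convexHull ℝ _ (hTne.choose_spec : hTne.choose ∈ (T : Set (E n)))⟩ c
    set v : E n := w - c with hv
    have hvne : v ≠ 0 := sub_ne_zero.2 fun h => hc (h ▸ hwT)
    have hδ : 0 < ‖v‖ ^ 2 := by
      have := norm_pos_iff.2 hvne; positivity
    have hkey : ∀ q ∈ T, ‖v‖ ^ 2 ≤ ⟪v, q - c⟫ := by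
      intro q hq
      have h1 : ⟪c - w, q - w⟫ ≤ 0 := hw _ (subset_convexHull ℝ _ hq)
      have h2 : ⟪v, q - c⟫ = -⟪c - w, q - w⟫ + ‖v‖ ^ 2 := by
        rw [hv, ← real_inner_self_eq_norm_sq]
        have : q - c = (q - w) + (w - c) := by abel
        rw [this, inner_add_right]
        rw [show c - w = -(w - c) by abel, inner_neg_left]
        ring
      rw [h2]; linarith
    -- pick a step size
    set g : E n → ℝ := fun q => if dist q c = ρ then 1 else (ρ - dist q c) / (2 * (‖v‖ + 1)) with hg
    set ε : ℝ := min (1 / (‖v‖ + 1)) (F.inf' hne g) with hε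
    have hvpos : (0:ℝ) < ‖v‖ := norm_pos_iff.2 hvne
    have hgpos : ∀ q ∈ F, 0 < g q := by
      intro q hq
      rw [hg]
      by_cases hqd : dist q c = ρ
      · simp [hqd]
      · have h1 : dist q c < ρ := lt_of_le_of_ne (hcball q hq) hqd
        simp only [if_neg hqd]
        exact div_pos (by linarith) (by positivity)
    have hεpos : 0 < ε := by
      rw [hε]
      refine lt_min (by positivity) ?_
      rw [Finset.lt_inf'_iff]
      exact fun q hq => hgpos q hq
    have hε1 : ε ≤ 1 / (‖v‖ + 1) := min_le_left _ _
    have hεle1 : ε ≤ 1 := le_trans hε1 (by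
      rw [div_le_one (by positivity)]; linarith)
    set c' : E n := c + ε • v with hc'
    have hc'3 : c' ∈ closedBall (0 : E n) 3 := by
      rw [mem_closedBall_zero_iff, hc']
      calc ‖c + ε • v‖ ≤ ‖c‖ + ‖ε • v‖ := norm_add_le _ _
      _ ≤ 2 + ε * ‖v‖ := by
          rw [norm_smul, Real.norm_eq_abs, abs_of_pos hεpos]; linarith
      _ ≤ 3 := by
          have : ε * ‖v‖ ≤ (1 / (‖v‖ + 1)) * ‖v‖ :=
            mul_le_mul_of_nonneg_right hε1 (norm_nonneg _)
          have h2 : (1 / (‖v‖ + 1)) * ‖v‖ ≤ 1 := by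
            rw [div_mul_eq_mul_div, div_le_one (by positivity)]; linarith
          linarith
    have hlt : ∀ q ∈ F, dist q c' < ρ := by
      intro q hq
      by_cases hqd : dist q c = ρ
      · -- touching point: use the inner product bound
        have hqT : q ∈ T := Finset.mem_filter.2 ⟨hq, hqd⟩
        have hk := hkey q hqT
        have hexp : dist q c' ^ 2
            = dist q c ^ 2 - 2 * ε * ⟪v, q - c⟫ + ε ^ 2 * ‖v‖ ^ 2 := by
          rw [dist_eq_norm, dist_eq_norm, hc']
          have : q - (c + ε • v) = (q - c) - ε • v := by abel
          rw [this, norm_sub_sq_real, inner_smul_right, norm_smul, Real.norm_eq_abs,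
            abs_of_pos hεpos, mul_pow, real_inner_comm]
          ring
        have hsq : dist q c' ^ 2 < ρ ^ 2 := by
          rw [hexp, hqd]
          have h1 : 2 * ε * ⟪v, q - c⟫ ≥ 2 * ε * ‖v‖ ^ 2 := by
            apply mul_le_mul_of_nonneg_left hk (by positivity)
          have h2 : ε ^ 2 * ‖v‖ ^ 2 < 2 * ε * ‖v‖ ^ 2 := by
            have : ε ^ 2 < 2 * ε := by nlinarith
            exact mul_lt_mul_of_pos_right this hδ
          linarith
        nlinarith [dist_nonneg (x := q) (y := c'), hsq, hρ0]
      · -- non-touching point: small move keeps it strictly inside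
        have h1 : dist q c < ρ := lt_of_le_of_ne (hcball q hq) hqd
        have h2 : ε ≤ (ρ - dist q c) / (2 * (‖v‖ + 1)) := by
          have := Finset.inf'_le g hq
          have hgq : g q = (ρ - dist q c) / (2 * (‖v‖ + 1)) := by rw [hg]; simp [hqd]
          rw [hε]
          exact le_trans (min_le_right _ _) (by rw [← hgq]; exact this)
        calc dist q c' ≤ dist q c + dist c c' := dist_triangle _ _ _
          _ = dist q c + ε * ‖v‖ := by
              rw [hc', dist_eq_norm]
              simp [norm_smul, abs_of_pos hεpos]
          _ < ρ := by
              have h3 : ε * ‖v‖ ≤ (ρ - dist q c) / (2 * (‖v‖ + 1)) * ‖v‖ :=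
                mul_le_mul_of_nonneg_right h2 (norm_nonneg _)
              have h4 : (ρ - dist q c) / (2 * (‖v‖ + 1)) * ‖v‖ < ρ - dist q c := by
                rw [div_mul_eq_mul_div, div_lt_iff₀ (by positivity)]
                nlinarith [norm_nonneg v]
              linarith
    have hflt : f c' < ρ := (Finset.sup'_lt_iff hne).2 hlt
    have h5 : ρ ≤ f c' := hmin hc'3
    linarith
  -- representation of c as a convex combination of touching points
  rw [Finset.convexHull_eq] at hcT
  obtain ⟨ν, hν0, hν1, hνc⟩ := hcT
  have hcsum : c = ∑ q ∈ T, ν q • q := by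
    rw [← hνc, Finset.centerMass_eq_of_sum_1 _ _ hν1]
    rfl
  have hinner : ∀ q ∈ T, ⟪c, q⟫ = (1 + ‖c‖ ^ 2 - ρ ^ 2) / 2 := by
    intro q hq
    have h1 : ρ ^ 2 = ‖q - c‖ ^ 2 := by rw [← hTdist q hq, dist_eq_norm]
    rw [norm_sub_sq_real, hsph q (hTF hq)] at h1
    have h2 : ⟪c, q⟫ = ⟪q, c⟫ := real_inner_comm _ _
    rw [h2]; linarith
  have hnc : ‖c‖ ^ 2 = 1 - ρ ^ 2 := by
    have h1 : ‖c‖ ^ 2 = ∑ q ∈ T, ν q * ⟪c, q⟫ := by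
      rw [← real_inner_self_eq_norm_sq]
      nth_rewrite 2 [hcsum]
      rw [inner_sum]
      exact Finset.sum_congr rfl fun q hq => real_inner_smul_right _ _ _
    have h2 : ∑ q ∈ T, ν q * ⟪c, q⟫ = (1 + ‖c‖ ^ 2 - ρ ^ 2) / 2 := by
      rw [Finset.sum_congr rfl fun q hq => by rw [hinner q hq], ← Finset.sum_mul, hν1, one_mul]
    rw [h2] at h1; linarith
  -- Jung-type averaging bound
  have hsum2 : ∀ j ∈ T, 2 * ρ ^ 2 ≤ D ^ 2 * (1 - ν j) := by
    intro j hj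
    have hA : ∑ i ∈ T, ν i * ‖i - j‖ ^ 2 = 2 * ρ ^ 2 := by
      have e1 : ∀ i ∈ T, ν i * ‖i - j‖ ^ 2 = 2 * ν i - 2 * (ν i * ⟪i, j⟫) := by
        intro i hi
        rw [norm_sub_sq_real, hsph i (hTF hi), hsph j (hTF hj)]
        ring
      rw [Finset.sum_congr rfl e1, Finset.sum_sub_distrib, ← Finset.mul_sum, ← Finset.mul_sum,
        hν1]
      have e2 : ∑ i ∈ T, ν i * ⟪i, j⟫ = ⟪c, j⟫ := by
        rw [hcsum, sum_inner]
        exact Finset.sum_congr rfl fun i hi => (real_inner_smul_left _ _ _).symm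
      rw [e2, hinner j hj, hnc]
      ring
    have hB : ∑ i ∈ T, ν i * ‖i - j‖ ^ 2 ≤ D ^ 2 * (1 - ν j) := by
      have e3 : ν j * ‖j - j‖ ^ 2 + ∑ i ∈ T.erase j, ν i * ‖i - j‖ ^ 2
          = ∑ i ∈ T, ν i * ‖i - j‖ ^ 2 := Finset.add_sum_erase T (fun i => ν i * ‖i - j‖ ^ 2) hj
      have e4 : ν j + ∑ i ∈ T.erase j, ν i = 1 := by
        rw [Finset.add_sum_erase _ _ hj, hν1]
      have e5 : ∑ i ∈ T.erase j, ν i * ‖i - j‖ ^ 2 ≤ ∑ i ∈ T.erase j, ν i * D ^ 2 := by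
        refine Finset.sum_le_sum fun i hi => ?_
        have hiT := Finset.mem_of_mem_erase hi
        have h6 : ‖i - j‖ ≤ D := by
          rw [← dist_eq_norm]; exact hdiam i (hTF hiT) j (hTF hj)
        have h7 : ‖i - j‖ ^ 2 ≤ D ^ 2 := by nlinarith [norm_nonneg (i - j)]
        exact mul_le_mul_of_nonneg_left h7 (hν0 i hiT)
      rw [← Finset.sum_mul] at e5
      have e7 : ∑ i ∈ T.erase j, ν i = 1 - ν j := by linarith
      rw [e7] at e5
      have hz : ν j * ‖j - j‖ ^ 2 = 0 := by simp
      linarith [e3, e5, hz, mul_comm (1 - ν j) (D ^ 2)]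
    linarith
  have hsum3 : 2 * ρ ^ 2 ≤ D ^ 2 * (1 - ∑ j ∈ T, ν j ^ 2) := by
    have h2 := Finset.sum_le_sum fun j hj =>
      mul_le_mul_of_nonneg_left (hsum2 j hj) (hν0 j hj)
    calc 2 * ρ ^ 2 = ∑ j ∈ T, ν j * (2 * ρ ^ 2) := by rw [← Finset.sum_mul, hν1, one_mul]
      _ ≤ ∑ j ∈ T, ν j * (D ^ 2 * (1 - ν j)) := h2
      _ = D ^ 2 * (1 - ∑ j ∈ T, ν j ^ 2) := by
          have e6 : ∀ j ∈ T, ν j * (D ^ 2 * (1 - ν j)) = D ^ 2 * ν j - D ^ 2 * ν j ^ 2 := by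
            intro j hj; ring
          rw [Finset.sum_congr rfl e6, Finset.sum_sub_distrib, ← Finset.mul_sum,
            ← Finset.mul_sum, hν1, mul_one]
          ring
  have hnpos : (0:ℝ) < n := by exact_mod_cast Nat.lt_of_lt_of_le Nat.zero_lt_one hn
  have hcardT : (1:ℝ) ≤ (n:ℝ) * ∑ j ∈ T, ν j ^ 2 := by
    have h1 : (∑ j ∈ T, ν j) ^ 2 ≤ (T.card : ℝ) * ∑ j ∈ T, ν j ^ 2 :=
      sq_sum_le_card_mul_sum_sq
    rw [hν1, one_pow] at h1
    have h2 : (T.card : ℝ) ≤ (n : ℝ) := by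
      exact_mod_cast le_trans (Finset.card_le_card hTF) hcard
    have h3 : (0:ℝ) ≤ ∑ j ∈ T, ν j ^ 2 :=
      Finset.sum_nonneg fun j hj => sq_nonneg _
    nlinarith
  have hjung : ρ ^ 2 ≤ ((n : ℝ) - 1) / (2 * n) * D ^ 2 := by
    rw [div_mul_eq_mul_div, le_div_iff₀ (by positivity)]
    nlinarith [mul_le_mul_of_nonneg_left hsum3 hnpos.le,
      mul_le_mul_of_nonneg_left hcardT (sq_nonneg D)]
  -- conclusion
  refine ⟨c, convexHull_mono (Finset.coe_subset.2 hTF) (by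
    rw [Finset.convexHull_eq]; exact ⟨ν, hν0, hν1, hνc⟩), ?_⟩
  intro x hx
  have hhalf : ∀ q ∈ (F : Set (E n)), q ∈ {x : E n | 1 - ((n : ℝ) - 1) / (2 * n) * D ^ 2 ≤ ⟪c, x⟫} := by
    intro q hqF
    have hqF' : q ∈ F := hqF
    have h1 : dist q c ^ 2 ≤ ρ ^ 2 := by
      nlinarith [hcball q hqF', dist_nonneg (x := q) (y := c)]
    have h2 : dist q c ^ 2 = 1 - 2 * ⟪q, c⟫ + ‖c‖ ^ 2 := by
      rw [dist_eq_norm, norm_sub_sq_real, hsph q hqF']; ring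
    have h3 : ⟪c, q⟫ = ⟪q, c⟫ := real_inner_comm _ _
    simp only [Set.mem_setOf_eq, h3]
    linarith [hjung, hnc]
  have hconv : Convex ℝ {x : E n | 1 - ((n : ℝ) - 1) / (2 * n) * D ^ 2 ≤ ⟪c, x⟫} :=
    convex_halfSpace_ge ⟨fun x y => inner_add_right _ _ _, fun r x => real_inner_smul_right _ _ _⟩ _
  exact convexHull_min hhalf hconv hx

set_option maxHeartbeats 1200000 in
lemma support_bound {n : ℕ} (hn : 2 ≤ n) {K : Set (E n)} (hK : IsCompact K) (hKc : Convex ℝ K)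
    (hKB : K ⊆ closedBall 0 1) (hmin : ∀ c' r', K ⊆ closedBall c' r' → (1 : ℝ) ≤ r')
    (hD : Metric.diam K < Real.sqrt (2 * (n : ℝ) / ((n : ℝ) - 1))) :
    ∀ b : E n, ‖b‖ = 1 → ∃ x ∈ K,
      Real.sqrt (1 - (((n : ℝ) - 1) / (2 * (n : ℝ))) * (Metric.diam K) ^ 2) ≤ ⟪b, x⟫ := by
  classical
  intro b hb
  set D : ℝ := Metric.diam K with hDdef
  set wc : ℝ := ((n : ℝ) - 1) / (2 * (n : ℝ)) * D ^ 2 with hwc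
  have hn2 : (2 : ℝ) ≤ (n : ℝ) := by exact_mod_cast hn
  have hnpos : (0 : ℝ) < n := by linarith
  have hn1 : (0 : ℝ) < (n : ℝ) - 1 := by linarith
  have hD0 : 0 ≤ D := Metric.diam_nonneg
  have hwc0 : 0 ≤ wc := by
    apply mul_nonneg (div_nonneg (by linarith) (by linarith)) (sq_nonneg D)
  have hwc1 : wc < 1 := by
    have h2 : Real.sqrt (2 * (n : ℝ) / ((n : ℝ) - 1)) ^ 2 = 2 * (n : ℝ) / ((n : ℝ) - 1) :=
      Real.sq_sqrt (div_nonneg (by linarith) (by linarith))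
    have h1 : D ^ 2 < 2 * (n : ℝ) / ((n : ℝ) - 1) := by
      nlinarith [hD, hD0, Real.sqrt_nonneg (2 * (n : ℝ) / ((n : ℝ) - 1))]
    have h3 : (0 : ℝ) < ((n : ℝ) - 1) / (2 * (n : ℝ)) := div_pos (by linarith) (by linarith)
    have h4 : wc < ((n : ℝ) - 1) / (2 * (n : ℝ)) * (2 * (n : ℝ) / ((n : ℝ) - 1)) :=
      mul_lt_mul_of_pos_left h1 h3
    have h5 : ((n : ℝ) - 1) / (2 * (n : ℝ)) * (2 * (n : ℝ) / ((n : ℝ) - 1)) = 1 := by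
      field_simp
    linarith
  have h0 := zero_mem_hull hK hKB hmin
  rw [convexHull_eq_union] at h0
  simp only [Set.mem_iUnion] at h0
  obtain ⟨s, hsP, hsAI, h0s⟩ := h0
  have hsne : s.Nonempty := by
    rcases s.eq_empty_or_nonempty with h | h
    · rw [h] at h0s; simp at h0s
    · exact h
  have hcards : s.card ≤ n + 1 := by
    have h1 := hsAI.card_le_finrank_succ
    rw [Fintype.card_coe] at h1
    have h2 : Module.finrank ℝ (vectorSpan ℝ (Set.range ((↑) : s → E n))) ≤ n := by
      have h3 := Submodule.finrank_le (vectorSpan ℝ (Set.range ((↑) : s → E n)))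
      rwa [finrank_euclideanSpace, Fintype.card_fin] at h3
    omega
  have hsnorm : ∀ q ∈ s, ‖q‖ = 1 := fun q hq => mem_sphere_zero_iff_norm.1 (hsP hq).2
  have hsK : (s : Set (E n)) ⊆ K := fun q hq => (hsP hq).1
  have hhullball : convexHull ℝ (s : Set (E n)) ⊆ closedBall 0 1 :=
    convexHull_min (fun q hq => mem_closedBall_zero_iff.2 (le_of_eq (hsnorm q hq)))
      (convex_closedBall _ _)
  set T₀ : Set ℝ := {t : ℝ | t • b ∈ convexHull ℝ (s : Set (E n))} with hT₀
  have hT₀closed : IsClosed T₀ :=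
    IsClosed.preimage (continuous_id.smul continuous_const)
      (((s : Set (E n)).toFinite.isCompact_convexHull ℝ).isClosed)
  have hT₀bdd : T₀ ⊆ Set.Icc (-1 : ℝ) 1 := by
    intro t htT
    have h1 : ‖t • b‖ ≤ 1 := mem_closedBall_zero_iff.1 (hhullball htT)
    rw [norm_smul, hb, mul_one, Real.norm_eq_abs] at h1
    exact abs_le.1 h1
  have h0T : (0 : ℝ) ∈ T₀ := by
    simp only [hT₀, Set.mem_setOf_eq, zero_smul]; exact h0s
  have hT₀comp : IsCompact T₀ :=
    Metric.isCompact_of_isClosed_isBounded hT₀closed ((isBounded_Icc (-1:ℝ) 1).subset hT₀bdd)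
  set t₁ : ℝ := sSup T₀ with ht₁def
  have ht₁T : t₁ ∈ T₀ := hT₀comp.sSup_mem ⟨0, h0T⟩
  have hbdda : BddAbove T₀ := hT₀comp.bddAbove
  have ht₁0 : 0 ≤ t₁ := le_csSup hbdda h0T
  have ht₁1 : t₁ ≤ 1 := (hT₀bdd ht₁T).2
  have htmem : t₁ • b ∈ convexHull ℝ (s : Set (E n)) := ht₁T
  rw [Finset.convexHull_eq] at htmem
  obtain ⟨wgt, hwgt0, hwgt1, hwgtc⟩ := htmem
  have hwsum : ∑ q ∈ s, wgt q • q = t₁ • b := by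
    rw [← hwgtc, Finset.centerMass_eq_of_sum_1 _ _ hwgt1]; rfl
  obtain ⟨F, hFs, hFcard, hFmem⟩ : ∃ F : Finset (E n), F ⊆ s ∧ F.card ≤ n ∧
      t₁ • b ∈ convexHull ℝ (F : Set (E n)) := by
    set F := s.filter (fun q => wgt q ≠ 0) with hF
    have hFs : F ⊆ s := Finset.filter_subset _ _
    have hsumF : ∑ q ∈ F, wgt q = 1 :=
      (Finset.sum_filter_of_ne (fun x _ h => h)).trans hwgt1
    have hvecF : ∑ q ∈ F, wgt q • q = t₁ • b := by
      refine (Finset.sum_filter_of_ne fun x hx h => ?_).trans hwsum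
      intro hx0
      exact h (by rw [hx0, zero_smul])
    have hFmem : t₁ • b ∈ convexHull ℝ (F : Set (E n)) := by
      rw [Finset.convexHull_eq]
      refine ⟨wgt, fun y hy => hwgt0 y (hFs hy), hsumF, ?_⟩
      rw [Finset.centerMass_eq_of_sum_1 _ _ hsumF]
      exact hvecF
    by_cases hc : F.card ≤ n
    · exact ⟨F, hFs, hc, hFmem⟩
    exfalso
    push_neg at hc
    have hFeq : F = s := Finset.eq_of_subset_of_card_le hFs (by omega)
    have hall : ∀ q ∈ s, 0 < wgt q := by
      intro q hq
      have hqF : q ∈ F := by rw [hFeq]; exact hq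
      exact lt_of_le_of_ne (hwgt0 q hq) (Ne.symm (Finset.mem_filter.1 hqF).2)
    have hcardeq : s.card = n + 1 := by
      have : F.card = s.card := by rw [hFeq]
      omega
    have htop : affineSpan ℝ (s : Set (E n)) = ⊤ := by
      have h6 := hsAI.affineSpan_eq_top_iff_card_eq_finrank_add_one.2
        (by rw [Fintype.card_coe, finrank_euclideanSpace, Fintype.card_fin, hcardeq])
      rwa [Subtype.range_coe] at h6
    have hbspan : b ∈ vectorSpan ℝ (s : Set (E n)) := by
      have h7 : vectorSpan ℝ (s : Set (E n)) = ⊤ := by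
        rw [← direction_affineSpan, htop]
        exact AffineSubspace.direction_top ℝ _ _
      rw [h7]; trivial
    obtain ⟨q₀, hq₀⟩ := hsne
    rw [vectorSpan_eq_span_vsub_set_right ℝ (show q₀ ∈ (s : Set (E n)) from hq₀)] at hbspan
    have himeq : ((· -ᵥ q₀) '' (s : Set (E n))) = ↑(s.image (fun x => x - q₀)) := by
      rw [Finset.coe_image]
      rfl
    rw [himeq, Submodule.mem_span_finset] at hbspan
    obtain ⟨g, -, hg⟩ := hbspan
    have hsum_im : ∑ y ∈ s.image (fun x => x - q₀), g y • y
        = ∑ q ∈ s, g (q - q₀) • (q - q₀) :=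
      Finset.sum_image (fun a _ c _ h => sub_left_inj.mp h)
    have hgb : ∑ q ∈ s, g (q - q₀) • (q - q₀) = b := by rw [← hsum_im]; exact hg
    set S : ℝ := ∑ p ∈ s, g (p - q₀) with hS
    set a : E n → ℝ := fun q => g (q - q₀) - (if q = q₀ then S else 0) with ha
    have hasum : ∑ q ∈ s, a q = 0 := by
      simp only [ha]
      rw [Finset.sum_sub_distrib]
      rw [Finset.sum_ite_eq' s q₀ (fun _ => S), if_pos hq₀]
      rw [← hS]; ring
    have havec : ∑ q ∈ s, a q • q = b := by
      have e1 : ∀ q ∈ s, a q • q = g (q - q₀) • q - (if q = q₀ then S • q₀ else 0) := by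
        intro q hq
        simp only [ha]
        by_cases h : q = q₀
        · rw [if_pos h, if_pos h, sub_smul, h]
        · rw [if_neg h, if_neg h, sub_zero, sub_zero]
      rw [Finset.sum_congr rfl e1, Finset.sum_sub_distrib,
        Finset.sum_ite_eq' s q₀ (fun _ => S • q₀), if_pos hq₀]
      have e2 : ∀ q ∈ s, g (q - q₀) • (q - q₀) = g (q - q₀) • q - g (q - q₀) • q₀ := by
        intro q hq; rw [smul_sub]
      rw [← hgb, Finset.sum_congr rfl e2, Finset.sum_sub_distrib, ← Finset.sum_smul, ← hS]
    set η : ℝ := s.inf' (show s.Nonempty from ⟨q₀, hq₀⟩) (fun q => wgt q / (|a q| + 1)) with hη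
    have hηpos : 0 < η := by
      rw [hη, Finset.lt_inf'_iff]
      exact fun q hq => div_pos (hall q hq) (by positivity)
    have hηle : ∀ q ∈ s, η ≤ wgt q / (|a q| + 1) := fun q hq => Finset.inf'_le _ hq
    have hcoeff : ∀ q ∈ s, 0 ≤ wgt q + η * a q := by
      intro q hq
      have h1 := hηle q hq
      have h2 : η * |a q| ≤ wgt q / (|a q| + 1) * |a q| :=
        mul_le_mul_of_nonneg_right h1 (abs_nonneg _)
      have h3 : wgt q / (|a q| + 1) * |a q| ≤ wgt q := by
        rw [div_mul_eq_mul_div, div_le_iff₀ (by positivity)]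
        nlinarith [abs_nonneg (a q), (hall q hq).le]
      have h4 : η * (-(|a q|)) ≤ η * a q :=
        mul_le_mul_of_nonneg_left (neg_abs_le _) hηpos.le
      nlinarith
    have hsum1 : ∑ q ∈ s, (wgt q + η * a q) = 1 := by
      rw [Finset.sum_add_distrib, hwgt1, ← Finset.mul_sum, hasum, mul_zero, add_zero]
    have hmemb : (t₁ + η) • b ∈ convexHull ℝ (s : Set (E n)) := by
      rw [Finset.convexHull_eq]
      refine ⟨fun q => wgt q + η * a q, hcoeff, hsum1, ?_⟩
      rw [Finset.centerMass_eq_of_sum_1 _ _ hsum1]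
      have e3 : ∀ q ∈ s, (wgt q + η * a q) • id q = wgt q • q + η • (a q • q) := by
        intro q hq
        rw [add_smul, smul_smul]
        rfl
      rw [Finset.sum_congr rfl e3, Finset.sum_add_distrib, ← Finset.smul_sum, havec, hwsum,
        add_smul]
    have hle := le_csSup hbdda (show t₁ + η ∈ T₀ from hmemb)
    linarith
  -- apply the deep point lemma to the face F
  have hFne : F.Nonempty := by
    rcases F.eq_empty_or_nonempty with h | h
    · rw [h] at hFmem; simp at hFmem
    · exact h
  have hFsphere : ∀ q ∈ F, ‖q‖ = 1 := fun q hq => hsnorm q (hFs hq)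
  have hFdiam : ∀ p ∈ F, ∀ q ∈ F, dist p q ≤ D := fun p hp q hq =>
    Metric.dist_le_diam_of_mem hK.isBounded (hsK (hFs hp)) (hsK (hFs hq))
  obtain ⟨c, hcF, hcdeep⟩ := exists_deep_point (by omega : 1 ≤ n) hFne hFsphere hFcard hD0 hFdiam
  have hFK : (F : Set (E n)) ⊆ K := fun q hq => hsK (hFs hq)
  have hcK : c ∈ K := convexHull_min hFK hKc hcF
  have hyK : t₁ • b ∈ K := convexHull_min hFK hKc hFmem
  have hkey : 1 - wc ≤ t₁ * ⟪c, b⟫ := by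
    have h8 := hcdeep (t₁ • b) hFmem
    rwa [real_inner_smul_right] at h8
  have h1wc : 0 < 1 - wc := by linarith
  have ht₁pos : 0 < t₁ := by
    rcases lt_or_eq_of_le ht₁0 with h | h
    · exact h
    · exfalso; rw [← h] at hkey; simp at hkey; linarith
  have hbcpos : 0 < ⟪c, b⟫ := by
    by_contra h
    push_neg at h
    nlinarith
  have hcb : ⟪c, b⟫ = ⟪b, c⟫ := real_inner_comm _ _
  rcases le_total (⟪b, c⟫) t₁ with hle | hle
  · refine ⟨t₁ • b, hyK, ?_⟩
    have hsq : 1 - wc ≤ t₁ ^ 2 := by nlinarith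
    have h9 : Real.sqrt (1 - wc) ≤ t₁ := by
      rw [show t₁ = Real.sqrt (t₁ ^ 2) by rw [Real.sqrt_sq ht₁0]]
      exact Real.sqrt_le_sqrt hsq
    have h10 : ⟪b, t₁ • b⟫ = t₁ := by
      rw [real_inner_smul_right, real_inner_self_eq_norm_sq, hb]
      ring
    rw [h10]
    exact h9
  · refine ⟨c, hcK, ?_⟩
    have hsq : 1 - wc ≤ ⟪b, c⟫ ^ 2 := by nlinarith
    have h9 : Real.sqrt (1 - wc) ≤ ⟪b, c⟫ := by
      rw [show ⟪b, c⟫ = Real.sqrt (⟪b, c⟫ ^ 2) by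
        rw [Real.sqrt_sq (by rw [← hcb]; exact hbcpos.le)]]
      exact Real.sqrt_le_sqrt hsq
    exact h9

/-- `IsCircumball A c r` : the closed ball of center `c` and radius `r` is the smallest
enclosing ball of `A` (ball of minimal radius containing `A`). -/
def IsCircumball {n : ℕ} (A : Set (E n)) (c : E n) (r : ℝ) : Prop :=
  A ⊆ closedBall c r ∧ ∀ c' r', A ⊆ closedBall c' r' → r ≤ r'

/-- A similarity of `ℝⁿ`: a map of the form `x ↦ u + λ σ x` with `λ > 0` and `σ` orthogonal. -/
def IsSimilarity {n : ℕ} (g : E n → E n) : Prop :=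
  ∃ (u : E n) (l : ℝ) (σ : E n ≃ₗᵢ[ℝ] E n), 0 < l ∧ ∀ x, g x = u + l • σ x

set_option maxHeartbeats 1000000 in
theorem stmt13 {n : ℕ} (hn : 2 ≤ n) (K : Set (E n)) (hK : IsCompact K) (hKc : Convex ℝ K)
    (hKB : K ⊆ closedBall 0 1) (hcb : IsCircumball K 0 1)
    (hD : Metric.diam K < Real.sqrt (2 * (n : ℝ) / ((n : ℝ) - 1))) :
    affineSpan ℝ K = ⊤ ∧
      closedBall (0 : E n) 1 ⊆
        K + closedBall (0 : E n)
          (1 - Real.sqrt (1 - (((n : ℝ) - 1) / (2 * (n : ℝ))) * (Metric.diam K) ^ 2)) := by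
  classical
  obtain ⟨-, hmin⟩ := hcb
  set D : ℝ := Metric.diam K with hDdef
  set w' : ℝ := (((n : ℝ) - 1) / (2 * (n : ℝ))) * D ^ 2 with hw'
  set ε : ℝ := 1 - Real.sqrt (1 - w') with hε
  have hn2 : (2 : ℝ) ≤ (n : ℝ) := by exact_mod_cast hn
  have hnpos : (0 : ℝ) < n := by linarith
  have hn1 : (0 : ℝ) < (n : ℝ) - 1 := by linarith
  have hD0 : 0 ≤ D := Metric.diam_nonneg
  have hwc0 : 0 ≤ w' :=
    mul_nonneg (div_nonneg (by linarith) (by linarith)) (sq_nonneg D)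
  have hwc1 : w' < 1 := by
    have h2 : Real.sqrt (2 * (n : ℝ) / ((n : ℝ) - 1)) ^ 2 = 2 * (n : ℝ) / ((n : ℝ) - 1) :=
      Real.sq_sqrt (div_nonneg (by linarith) (by linarith))
    have h1 : D ^ 2 < 2 * (n : ℝ) / ((n : ℝ) - 1) := by
      nlinarith [hD, hD0, Real.sqrt_nonneg (2 * (n : ℝ) / ((n : ℝ) - 1))]
    have h3 : (0 : ℝ) < ((n : ℝ) - 1) / (2 * (n : ℝ)) := div_pos (by linarith) (by linarith)
    have h4 : w' < ((n : ℝ) - 1) / (2 * (n : ℝ)) * (2 * (n : ℝ) / ((n : ℝ) - 1)) :=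
      mul_lt_mul_of_pos_left h1 h3
    have h5 : ((n : ℝ) - 1) / (2 * (n : ℝ)) * (2 * (n : ℝ) / ((n : ℝ) - 1)) = 1 := by
      field_simp
    linarith
  have hs01 : Real.sqrt (1 - w') ≤ 1 := by
    calc Real.sqrt (1 - w') ≤ Real.sqrt 1 := Real.sqrt_le_sqrt (by linarith)
      _ = 1 := Real.sqrt_one
  have hspos : 0 < Real.sqrt (1 - w') := Real.sqrt_pos.2 (by linarith)
  have hε0 : 0 ≤ ε := by rw [hε]; linarith
  have hε1 : ε < 1 := by rw [hε]; linarith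
  have hKne : K.Nonempty := by
    rcases K.eq_empty_or_nonempty with h | h
    · have := hmin 0 0 (by rw [h]; exact empty_subset _)
      norm_num at this
    · exact h
  have hsupp := support_bound hn hK hKc hKB hmin hD
  have hpart2 : closedBall (0 : E n) 1 ⊆ K + closedBall (0 : E n) ε := by
    intro z hz
    by_contra hzC
    set C : Set (E n) := K + closedBall (0 : E n) ε with hC
    have hCcomp : IsCompact C := hK.add (isCompact_closedBall _ _)
    have hCconv : Convex ℝ C := hKc.add (convex_closedBall _ _)
    have hCne : C.Nonempty := by
      obtain ⟨x₀, hx₀⟩ := hKne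
      exact ⟨x₀ + 0, Set.add_mem_add hx₀ (mem_closedBall_self hε0)⟩
    obtain ⟨w₀, hw₀C, hw₀⟩ := exists_proj hCconv hCcomp.isClosed hCne z
    set v : E n := z - w₀ with hv
    have hvne : v ≠ 0 := sub_ne_zero.2 (fun h => hzC (h ▸ hw₀C))
    have hvpos : 0 < ‖v‖ := norm_pos_iff.2 hvne
    set bb : E n := ‖v‖⁻¹ • v with hbb
    have hbbn : ‖bb‖ = 1 := norm_smul_inv_norm hvne
    obtain ⟨x, hxK, hx⟩ := hsupp bb hbbn
    have hyC : x + ε • bb ∈ C := Set.add_mem_add hxK (by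
      rw [mem_closedBall_zero_iff, norm_smul, Real.norm_eq_abs, abs_of_nonneg hε0, hbbn,
        mul_one])
    have h1 : ⟪v, x + ε • bb - w₀⟫ ≤ 0 := hw₀ _ hyC
    have hveq : v = ‖v‖ • bb := by
      rw [hbb, smul_smul, mul_inv_cancel₀ hvpos.ne', one_smul]
    have hvb : ⟪v, bb⟫ = ‖v‖ := by
      nth_rewrite 1 [hveq]
      rw [real_inner_smul_left, real_inner_self_eq_norm_sq, hbbn]
      ring
    have hvx : ⟪v, x⟫ = ‖v‖ * ⟪bb, x⟫ := by
      nth_rewrite 1 [hveq]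
      rw [real_inner_smul_left]
    have hw₀eq : w₀ = z - v := by rw [hv]; abel
    have hvw₀ : ⟪v, w₀⟫ = ⟪v, z⟫ - ‖v‖ ^ 2 := by
      rw [hw₀eq, inner_sub_right, real_inner_self_eq_norm_sq]
    have hvz : ⟪v, z⟫ ≤ ‖v‖ := by
      calc ⟪v, z⟫ ≤ ‖v‖ * ‖z‖ := real_inner_le_norm _ _
        _ ≤ ‖v‖ * 1 := mul_le_mul_of_nonneg_left (mem_closedBall_zero_iff.1 hz) (norm_nonneg _)
        _ = ‖v‖ := mul_one _
    have hexp : ⟪v, x + ε • bb - w₀⟫ = ⟪v, x⟫ + ε * ⟪v, bb⟫ - ⟪v, w₀⟫ := by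
      rw [inner_sub_right, inner_add_right, real_inner_smul_right]
    have hbx : 1 - ε ≤ ⟪bb, x⟫ := by rw [hε]; linarith [hx]
    rw [hexp, hvx, hvb, hvw₀] at h1
    nlinarith [mul_le_mul_of_nonneg_left hbx hvpos.le]
  refine ⟨?_, hpart2⟩
  by_contra htop
  obtain ⟨x₀, hx₀K⟩ := hKne
  have hdir : (affineSpan ℝ K).direction ≠ ⊤ := by
    intro h
    exact htop ((AffineSubspace.direction_eq_top_iff_of_nonempty
      ⟨x₀, subset_affineSpan ℝ K hx₀K⟩).1 h)
  have hVorth : (affineSpan ℝ K).directionᗮ ≠ ⊥ := by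
    intro h
    exact hdir (Submodule.orthogonal_eq_bot_iff.1 h)
  obtain ⟨v, hvV, hvne⟩ := (Submodule.ne_bot_iff _).1 hVorth
  set u : E n := ‖v‖⁻¹ • v with hu
  have huV : u ∈ (affineSpan ℝ K).directionᗮ := Submodule.smul_mem _ _ hvV
  have hun : ‖u‖ = 1 := norm_smul_inv_norm hvne
  have hconst : ∀ x ∈ K, ⟪u, x⟫ = ⟪u, x₀⟫ := by
    intro x hx
    have h1 : x -ᵥ x₀ ∈ (affineSpan ℝ K).direction :=
      AffineSubspace.vsub_mem_direction (subset_affineSpan ℝ K hx)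
        (subset_affineSpan ℝ K hx₀K)
    have h2 : ⟪x - x₀, u⟫ = 0 := (Submodule.mem_orthogonal _ u).1 huV _ h1
    have h3 : ⟪u, x - x₀⟫ = 0 := by rw [real_inner_comm]; exact h2
    rw [inner_sub_right] at h3
    linarith
  have hu1 : u ∈ closedBall (0 : E n) 1 := mem_closedBall_zero_iff.2 (le_of_eq hun)
  have hu2 : -u ∈ closedBall (0 : E n) 1 := mem_closedBall_zero_iff.2 (by rw [norm_neg, hun])
  obtain ⟨x1, hx1K, e1, he1, hxe1⟩ := Set.mem_add.1 (hpart2 hu1)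
  obtain ⟨x2, hx2K, e2, he2, hxe2⟩ := Set.mem_add.1 (hpart2 hu2)
  have hself : ⟪u, u⟫ = 1 := by rw [real_inner_self_eq_norm_sq, hun]; ring
  have hie1 : |⟪u, e1⟫| ≤ ε := by
    calc |⟪u, e1⟫| ≤ ‖u‖ * ‖e1‖ := abs_real_inner_le_norm _ _
      _ ≤ 1 * ε := by
          rw [hun]
          exact mul_le_mul_of_nonneg_left (mem_closedBall_zero_iff.1 he1) zero_le_one
      _ = ε := one_mul _
  have hie2 : |⟪u, e2⟫| ≤ ε := by
    calc |⟪u, e2⟫| ≤ ‖u‖ * ‖e2‖ := abs_real_inner_le_norm _ _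
      _ ≤ 1 * ε := by
          rw [hun]
          exact mul_le_mul_of_nonneg_left (mem_closedBall_zero_iff.1 he2) zero_le_one
      _ = ε := one_mul _
  have heq1 : (1 : ℝ) = ⟪u, x₀⟫ + ⟪u, e1⟫ := by
    rw [← hself]
    nth_rewrite 2 [show u = x1 + e1 from hxe1.symm]
    rw [inner_add_right, hconst x1 hx1K]
  have heq2 : (-1 : ℝ) = ⟪u, x₀⟫ + ⟪u, e2⟫ := by
    have : ⟪u, -u⟫ = -1 := by rw [inner_neg_right, hself]
    rw [← this]
    nth_rewrite 1 [show -u = x2 + e2 from hxe2.symm]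
    rw [inner_add_right, hconst x2 hx2K]
  have ha1 := abs_le.1 hie1
  have ha2 := abs_le.1 hie2
  linarith
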